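/- Let H be a finite-dimensional (nonzero) Hilbert space over ℝ or ℂ and let {τ_j}_{j=1}^n and {ω_k}_{k=1}^n be two orthonormal bases for H. Then sup_{h ∈ H, ‖h‖=1} max_{1≤j,k≤n} |⟨h, τ_j⟩ ⟨h, ω_k⟩| ≤ (1 + max_{1≤j,k≤n} |⟨τ_j, ω_k⟩|) / 2. -/

import Mathlib

lemma buzano' {𝕜 H : Type*} [RCLike 𝕜] [NormedAddCommGroup H] [InnerProductSpace 𝕜 H]
    (x y u : H) (hu : ‖u‖ = 1) :
    ‖(inner 𝕜 x u : 𝕜)‖ * ‖(inner 𝕜 u y : 𝕜)‖ ≤ (‖x‖ * ‖y‖ + ‖(inner 𝕜 x y : 𝕜)‖) / 2 := by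
  set c : 𝕜 := inner 𝕜 u x with hc
  set v : H := (2 * c) • u - x with hv
  have hvx : ‖v‖ = ‖x‖ := by
    have h1 : ‖v‖ ^ 2 = ‖(2*c) • u‖ ^ 2 - 2 * RCLike.re ((inner 𝕜 ((2*c) • u) x : 𝕜)) + ‖x‖ ^ 2 := by
      rw [hv, @norm_sub_sq 𝕜]
    have h2 : (inner 𝕜 ((2*c) • u) x : 𝕜) = (starRingEnd 𝕜) (2*c) * c := by
      rw [inner_smul_left, hc]
    have h2' : ‖(2:𝕜)‖ = 2 := by simp
    have h3 : ‖(2*c) • u‖ ^ 2 = 4 * ‖c‖ ^ 2 := by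
      rw [norm_smul, hu, mul_one, norm_mul, h2']; ring
    have h4 : RCLike.re ((starRingEnd 𝕜) (2*c) * c) = 2 * ‖c‖ ^ 2 := by
      have hh : (starRingEnd 𝕜) (2*c) * c = 2 * ((starRingEnd 𝕜) c * c) := by
        rw [map_mul]
        rw [map_ofNat (starRingEnd 𝕜) 2]; ring
      rw [hh, RCLike.conj_mul,
        show ((2:𝕜) * ((‖c‖ : ℝ) : 𝕜)^2) = (((2 * ‖c‖^2 : ℝ)) : 𝕜) by push_cast; ring]
      exact RCLike.ofReal_re _
    have hsq : ‖v‖ ^ 2 = ‖x‖ ^ 2 := by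
      rw [h1, h2, h3, h4]; ring
    nlinarith [norm_nonneg v, norm_nonneg x]
  have key : (2 : 𝕜) * ((inner 𝕜 x u : 𝕜) * (inner 𝕜 u y : 𝕜)) = inner 𝕜 x y + inner 𝕜 v y := by
    rw [hv, inner_sub_left, inner_smul_left, map_mul, inner_conj_symm,
      map_ofNat (starRingEnd 𝕜) 2]
    ring
  have h5 : 2 * (‖(inner 𝕜 x u : 𝕜)‖ * ‖(inner 𝕜 u y : 𝕜)‖) ≤ ‖(inner 𝕜 x y : 𝕜)‖ + ‖v‖ * ‖y‖ := by
    calc 2 * (‖(inner 𝕜 x u : 𝕜)‖ * ‖(inner 𝕜 u y : 𝕜)‖)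
        = ‖(2 : 𝕜) * ((inner 𝕜 x u : 𝕜) * (inner 𝕜 u y : 𝕜))‖ := by
          rw [norm_mul, norm_mul]; simp
      _ = ‖(inner 𝕜 x y : 𝕜) + (inner 𝕜 v y : 𝕜)‖ := by rw [key]
      _ ≤ ‖(inner 𝕜 x y : 𝕜)‖ + ‖(inner 𝕜 v y : 𝕜)‖ := norm_add_le _ _
      _ ≤ ‖(inner 𝕜 x y : 𝕜)‖ + ‖v‖ * ‖y‖ := by
          gcongr; exact norm_inner_le_norm v y
  rw [hvx] at h5
  linarith

theorem stmt_9 {𝕜 H : Type*} [RCLike 𝕜] [NormedAddCommGroup H] [InnerProductSpace 𝕜 H]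
    [FiniteDimensional 𝕜 H] [Nontrivial H] {n : ℕ}
    (τ : OrthonormalBasis (Fin n) 𝕜 H) (ω : OrthonormalBasis (Fin n) 𝕜 H) :
    (⨆ h : {h : H // ‖h‖ = 1}, ⨆ j, ⨆ k, ‖(inner 𝕜 (h : H) (τ j) : 𝕜)‖ * ‖(inner 𝕜 (h : H) (ω k) : 𝕜)‖)
      ≤ (1 + ⨆ j, ⨆ k, ‖(inner 𝕜 (τ j) (ω k) : 𝕜)‖) / 2 := by
  set S : ℝ := ⨆ j, ⨆ k, ‖(inner 𝕜 (τ j) (ω k) : 𝕜)‖ with hS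
  have hS0 : 0 ≤ S := Real.iSup_nonneg fun j => Real.iSup_nonneg fun k => norm_nonneg _
  have hjk : ∀ j k, ‖(inner 𝕜 (τ j) (ω k) : 𝕜)‖ ≤ S := by
    intro j k
    calc ‖(inner 𝕜 (τ j) (ω k) : 𝕜)‖
        ≤ ⨆ k, ‖(inner 𝕜 (τ j) (ω k) : 𝕜)‖ :=
          le_ciSup (f := fun k => ‖(inner 𝕜 (τ j) (ω k) : 𝕜)‖)
            (Set.Finite.bddAbove (Set.finite_range _)) k
      _ ≤ S := le_ciSup (f := fun j => ⨆ k, ‖(inner 𝕜 (τ j) (ω k) : 𝕜)‖)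
          (Set.Finite.bddAbove (Set.finite_range _)) j
  apply Real.iSup_le _ (by linarith)
  rintro ⟨h, hh⟩
  apply Real.iSup_le _ (by linarith)
  intro j
  apply Real.iSup_le _ (by linarith)
  intro k
  have hb := buzano' (𝕜 := 𝕜) (τ j) (ω k) h hh
  rw [norm_inner_symm] at hb
  have hτ : ‖τ j‖ = 1 := τ.orthonormal.1 j
  have hω : ‖ω k‖ = 1 := ω.orthonormal.1 k
  rw [hτ, hω, one_mul] at hb
  have hS' := hjk j k
  show ‖(inner 𝕜 h (τ j) : 𝕜)‖ * ‖(inner 𝕜 h (ω k) : 𝕜)‖ ≤ (1 + S) / 2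
  exact le_trans hb (by linarith)
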